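/- Let φ ∈ 𝒫, t₀ ∈ ℝ, (tᵢ) an impulse time sequence, and let v: [t₀,∞) → [0,∞) be impulsive-regular with D⁺v(t) ≤ −φ(v(t)) at every non-impulse time t and v(tᵢ) ≤ v(tᵢ⁻) at every impulse time tᵢ. If v(t∗) = 0 for some t∗ ≥ t₀, then v(t) = 0 for all t ≥ t∗. -/

import Mathlib

open Filter Topology Set MeasureTheory

noncomputable section

/-- Class 𝒦: continuous, strictly increasing on `[0,∞)`, vanishing at `0`. -/
def ClassK (γ : ℝ → ℝ) : Prop :=
  ContinuousOn γ (Set.Ici 0) ∧ StrictMonoOn γ (Set.Ici 0) ∧ γ 0 = 0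

/-- Class 𝒦∞: class 𝒦 and unbounded. -/
def ClassKInf (γ : ℝ → ℝ) : Prop :=
  ClassK γ ∧ Filter.Tendsto γ Filter.atTop Filter.atTop

/-- Class 𝒦ℒ. -/
def ClassKL (β : ℝ → ℝ → ℝ) : Prop :=
  (∀ s, 0 ≤ s → ClassK (fun r => β r s)) ∧
  (∀ r, 0 ≤ r → AntitoneOn (fun s => β r s) (Set.Ici 0) ∧
    Filter.Tendsto (fun s => β r s) Filter.atTop (nhds 0))

/-- Class 𝒫: continuous, positive definite. -/
def ClassP (φ : ℝ → ℝ) : Prop :=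
  ContinuousOn φ (Set.Ici 0) ∧ φ 0 = 0 ∧ ∀ r, 0 < r → 0 < φ r

/-- Upper right Dini derivative `D⁺v(t) = limsup_{s→0⁺} (v(t+s) − v(t))/s`, valued in `EReal`. -/
def DiniUpper (v : ℝ → ℝ) (t : ℝ) : EReal :=
  Filter.limsup (fun s => (((v (t + s) - v t) / s : ℝ) : EReal)) (nhdsWithin 0 (Set.Ioi 0))

/-- Impulse time sequence with initial time `t₀ = τ 0`: strictly increasing and tending to `∞`;
the impulse times are `τ i` for `i ≥ 1`. -/
def IsImpulseSeq (t₀ : ℝ) (τ : ℕ → ℝ) : Prop :=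
  τ 0 = t₀ ∧ StrictMono τ ∧ Filter.Tendsto τ Filter.atTop Filter.atTop

/-- The set `S = {tᵢ : i ≥ 1}` of impulse times. -/
def impulseSet (τ : ℕ → ℝ) : Set ℝ := {s | ∃ i : ℕ, 1 ≤ i ∧ τ i = s}

/-- Impulsive-regular function on `[t₀,∞)`: right-continuous everywhere, continuous (within
`[t₀,∞)`) at every non-impulse time, and left limits exist at every impulse time. -/
def ImpulsiveRegular (t₀ : ℝ) (τ : ℕ → ℝ) (v : ℝ → ℝ) : Prop :=
  (∀ t, t₀ ≤ t → ContinuousWithinAt v (Set.Ici t) t) ∧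
  (∀ t, t₀ ≤ t → t ∉ impulseSet τ → ContinuousWithinAt v (Set.Ici t₀) t) ∧
  (∀ i : ℕ, 1 ≤ i → ∃ L : ℝ, Filter.Tendsto v (nhdsWithin (τ i) (Set.Iio (τ i))) (nhds L))

lemma phi_nonneg {φ : ℝ → ℝ} (hφ : ClassP φ) {r : ℝ} (hr : 0 ≤ r) : 0 ≤ φ r := by
  rcases hr.eq_or_lt with h | h
  · rw [← h, hφ.2.1]
  · exact (hφ.2.2 r h).le

lemma dini_step {φ v : ℝ → ℝ} (hφ : ClassP φ) {c : ℝ} (hvc : 0 ≤ v c)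
    (hd : DiniUpper v c ≤ (((-φ (v c)) : ℝ) : EReal)) {ε : ℝ} (hε : 0 < ε) :
    ∃ δ > 0, ∀ u : ℝ, 0 < u → u < δ → v (c + u) ≤ v c + ε * u := by
  have h1 : DiniUpper v c < ((ε : ℝ) : EReal) := by
    refine lt_of_le_of_lt hd ?_
    exact_mod_cast (by linarith [phi_nonneg hφ hvc] : -φ (v c) < ε)
  have h2 : ∀ᶠ s in nhdsWithin (0:ℝ) (Set.Ioi 0),
      (((v (c + s) - v c) / s : ℝ) : EReal) < ((ε : ℝ) : EReal) :=
    Filter.eventually_lt_of_limsup_lt h1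
  have h3 : ∀ᶠ s in nhdsWithin (0:ℝ) (Set.Ioi 0), (v (c + s) - v c) / s < ε := by
    filter_upwards [h2] with s hs
    exact_mod_cast hs
  obtain ⟨δ, hδ, h4⟩ := mem_nhdsGT_iff_exists_Ioo_subset.mp h3
  refine ⟨δ, hδ, fun u hu huδ => ?_⟩
  have h5 := h4 ⟨hu, huδ⟩
  have := (div_lt_iff₀ hu).mp h5
  linarith

lemma bound_to_le {v : ℝ → ℝ} {x y : ℝ} (hxy : x ≤ y)
    (h : ∀ ε : ℝ, 0 < ε → v y ≤ v x + ε * (y - x)) : v y ≤ v x := by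
  rcases hxy.eq_or_lt with rfl | hlt
  · simpa using h 1 one_pos
  · refine le_of_forall_pos_le_add fun δ hδ => ?_
    have := h (δ / (y - x)) (div_pos hδ (by linarith))
    have hyx : y - x ≠ 0 := by linarith
    rw [div_mul_cancel₀ _ hyx] at this
    exact this

lemma noImpulse_mono {φ : ℝ → ℝ} (hφ : ClassP φ) {t₀ : ℝ} {τ : ℕ → ℝ} {v : ℝ → ℝ}
    (hvnn : ∀ t, t₀ ≤ t → 0 ≤ v t)
    (hcont : ∀ t, t₀ ≤ t → t ∉ impulseSet τ → ContinuousWithinAt v (Set.Ici t₀) t)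
    (hflow : ∀ t, t₀ ≤ t → t ∉ impulseSet τ →
      DiniUpper v t ≤ (((-φ (v t)) : ℝ) : EReal))
    {x y : ℝ} (hx : t₀ ≤ x) (hxy : x ≤ y)
    (hS : ∀ s, x ≤ s → s ≤ y → s ∉ impulseSet τ) :
    v y ≤ v x := by
  apply bound_to_le hxy
  intro ε hε
  set A : Set ℝ := {t | t ∈ Set.Icc x y ∧ ∀ s, x ≤ s → s ≤ t → v s ≤ v x + ε * (s - x)}
    with hAdef
  have hxA : x ∈ A := ⟨⟨le_refl x, hxy⟩, fun s hs hs' => by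
    have hsx : s = x := le_antisymm hs' hs
    simp [hsx]⟩
  have hne : A.Nonempty := ⟨x, hxA⟩
  have hbdd : BddAbove A := ⟨y, fun t ht => ht.1.2⟩
  set c := sSup A with hc
  have hxc : x ≤ c := le_csSup hbdd hxA
  have hcy : c ≤ y := csSup_le hne fun t ht => ht.1.2
  have hlt : ∀ s, x ≤ s → s < c → v s ≤ v x + ε * (s - x) := by
    intro s hs hsc
    obtain ⟨t, htA, hst⟩ := exists_lt_of_lt_csSup hne hsc
    exact htA.2 s hs hst.le
  have hcb : v c ≤ v x + ε * (c - x) := by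
    rcases hxc.eq_or_lt with h | h
    · simp [← h]
    · have hcnotS : c ∉ impulseSet τ := hS c hxc hcy
      have hcont' : Filter.Tendsto v (nhdsWithin c (Set.Iio c)) (nhds (v c)) := by
        refine (hcont c (hx.trans hxc) hcnotS).mono_left ?_
        rw [nhdsWithin_le_iff]
        exact mem_nhdsWithin_of_mem_nhds (Ici_mem_nhds (lt_of_le_of_lt hx h))
      apply le_of_tendsto hcont'
      filter_upwards [Ioo_mem_nhdsLT_of_mem (Set.right_mem_Ioc.mpr h)] with s hs
      have h1 := hlt s hs.1.le hs.2
      nlinarith [hs.2.le]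
  have hcA : c ∈ A := ⟨⟨hxc, hcy⟩, fun s hs hs' => by
    rcases hs'.eq_or_lt with rfl | h
    · exact hcb
    · exact hlt s hs h⟩
  have hceq : c = y := by
    by_contra hne'
    have hcy2 : c < y := lt_of_le_of_ne hcy hne'
    obtain ⟨δ, hδ, hstep⟩ := dini_step hφ (hvnn c (hx.trans hxc))
      (hflow c (hx.trans hxc) (hS c hxc hcy)) hε
    set t := min y (c + δ / 2) with ht
    have hct : c < t := lt_min hcy2 (by linarith)
    have htA : t ∈ A := by
      refine ⟨⟨hxc.trans hct.le, min_le_left _ _⟩, fun s hs hs' => ?_⟩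
      rcases le_or_gt s c with h | h
      · exact hcA.2 s hs h
      · have hsle : s ≤ c + δ / 2 := hs'.trans (min_le_right _ _)
        have hu := hstep (s - c) (by linarith) (by linarith)
        have hcs : c + (s - c) = s := by ring
        rw [hcs] at hu
        nlinarith
    exact absurd (le_csSup hbdd htA) (not_le.mpr hct)
  have := hcA.2 y hxy hceq.ge
  exact this

lemma global_mono {φ : ℝ → ℝ} (hφ : ClassP φ) {t₀ : ℝ} {τ : ℕ → ℝ}
    (hτ : IsImpulseSeq t₀ τ) {v : ℝ → ℝ}
    (hvnn : ∀ t, t₀ ≤ t → 0 ≤ v t)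
    (hreg : (∀ t, t₀ ≤ t → ContinuousWithinAt v (Set.Ici t) t) ∧
      (∀ t, t₀ ≤ t → t ∉ impulseSet τ → ContinuousWithinAt v (Set.Ici t₀) t) ∧
      (∀ i : ℕ, 1 ≤ i → ∃ L : ℝ, Filter.Tendsto v (nhdsWithin (τ i) (Set.Iio (τ i))) (nhds L)))
    (hflow : ∀ t, t₀ ≤ t → t ∉ impulseSet τ →
      DiniUpper v t ≤ (((-φ (v t)) : ℝ) : EReal))
    (hjump : ∀ i : ℕ, 1 ≤ i → v (τ i) ≤ Function.leftLim v (τ i))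
    {a b : ℝ} (ha : t₀ ≤ a) (hab : a ≤ b) : v b ≤ v a := by
  apply bound_to_le hab
  intro ε hε
  set A : Set ℝ := {t | t ∈ Set.Icc a b ∧ ∀ s, a ≤ s → s ≤ t → v s ≤ v a + ε * (s - a)}
    with hAdef
  have haA : a ∈ A := ⟨⟨le_refl a, hab⟩, fun s hs hs' => by
    have hsa : s = a := le_antisymm hs' hs
    simp [hsa]⟩
  have hne : A.Nonempty := ⟨a, haA⟩
  have hbdd : BddAbove A := ⟨b, fun t ht => ht.1.2⟩
  set c := sSup A with hc
  have hac : a ≤ c := le_csSup hbdd haA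
  have hcb : c ≤ b := csSup_le hne fun t ht => ht.1.2
  have ht₀c : t₀ ≤ c := ha.trans hac
  have hlt : ∀ s, a ≤ s → s < c → v s ≤ v a + ε * (s - a) := by
    intro s hs hsc
    obtain ⟨t, htA, hst⟩ := exists_lt_of_lt_csSup hne hsc
    exact htA.2 s hs hst.le
  -- the value at c satisfies the bound
  have hvcb : v c ≤ v a + ε * (c - a) := by
    rcases hac.eq_or_lt with h | h
    · simp [← h]
    · have hlim : ∀ L : ℝ, Filter.Tendsto v (nhdsWithin c (Set.Iio c)) (nhds L) →
          L ≤ v a + ε * (c - a) := by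
        intro L hL
        apply le_of_tendsto hL
        filter_upwards [Ioo_mem_nhdsLT_of_mem (Set.right_mem_Ioc.mpr h)] with s hs
        have h1 := hlt s hs.1.le hs.2
        nlinarith [hs.2.le]
      by_cases hcS : c ∈ impulseSet τ
      · obtain ⟨i, hi, hτi⟩ := hcS
        obtain ⟨L, hL⟩ := hreg.2.2 i hi
        rw [hτi] at hL
        have hll : Function.leftLim v c = L :=
          leftLim_eq_of_tendsto hL
        have := hjump i hi
        rw [hτi, hll] at this
        exact this.trans (hlim L hL)
      · have hcont' : Filter.Tendsto v (nhdsWithin c (Set.Iio c)) (nhds (v c)) := by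
          refine (hreg.2.1 c ht₀c hcS).mono_left ?_
          rw [nhdsWithin_le_iff]
          exact mem_nhdsWithin_of_mem_nhds (Ici_mem_nhds (lt_of_le_of_lt ha h))
        exact hlim (v c) hcont'
  have hcA : c ∈ A := ⟨⟨hac, hcb⟩, fun s hs hs' => by
    rcases hs'.eq_or_lt with rfl | h
    · exact hvcb
    · exact hlt s hs h⟩
  have hceq : c = b := by
    by_contra hne'
    have hcb2 : c < b := lt_of_le_of_ne hcb hne'
    by_cases hcS : c ∈ impulseSet τ
    · -- c is an impulse time; no impulses just after c
      obtain ⟨i, hi, hτi⟩ := hcS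
      have hnext : c < τ (i + 1) := by
        rw [← hτi]; exact hτ.2.1 (Nat.lt_succ_self i)
      set t := min b ((c + τ (i + 1)) / 2) with ht
      have hct : c < t := lt_min hcb2 (by linarith)
      have htnext : t < τ (i + 1) := (min_le_right _ _).trans_lt (by linarith)
      have hnoS : ∀ s, c < s → s ≤ t → s ∉ impulseSet τ := by
        rintro s hcs hst ⟨j, hj, hτj⟩
        have hij : i < j := by
          by_contra hji
          push_neg at hji
          have : τ j ≤ τ i := hτ.2.1.monotone hji
          rw [hτi, hτj] at this
          exact absurd this (not_le.mpr hcs)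
        have : τ (i + 1) ≤ τ j := hτ.2.1.monotone hij
        rw [hτj] at this
        linarith [hst.trans_lt htnext]
      -- for any s ∈ (c, t], v s ≤ v c
      have hkey : ∀ s, c < s → s ≤ t → v s ≤ v c := by
        intro s hcs hst
        have h1 : ∀ u : ℝ, 0 < u → u < s - c → v s ≤ v (c + u) := by
          intro u hu hu2
          have hx : t₀ ≤ c + u := by linarith
          have hxy : c + u ≤ s := by linarith
          refine noImpulse_mono hφ hvnn hreg.2.1 hflow hx hxy fun r hr hr' => ?_
          exact hnoS r (by linarith) (hr'.trans hst)
        have hadd : Filter.Tendsto (fun u : ℝ => c + u) (nhdsWithin 0 (Set.Ioi 0))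
            (nhdsWithin c (Set.Ici c)) := by
          apply tendsto_nhdsWithin_of_tendsto_nhds_of_eventually_within
          · have : Filter.Tendsto (fun u : ℝ => c + u) (nhds 0) (nhds (c + 0)) :=
              tendsto_const_nhds.add tendsto_id
            simpa using this.mono_left nhdsWithin_le_nhds
          · filter_upwards [self_mem_nhdsWithin] with u hu
            exact le_add_of_nonneg_right (le_of_lt (Set.mem_Ioi.mp hu))
        have hv : Filter.Tendsto (fun u : ℝ => v (c + u)) (nhdsWithin 0 (Set.Ioi 0))
            (nhds (v c)) := Filter.Tendsto.comp (hreg.1 c ht₀c) hadd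
        apply ge_of_tendsto hv
        filter_upwards [Ioo_mem_nhdsGT_of_mem (Set.left_mem_Ico.mpr (by linarith : (0:ℝ) < s - c))]
          with u hu
        exact h1 u hu.1 hu.2
      have htA : t ∈ A := by
        refine ⟨⟨hac.trans hct.le, min_le_left _ _⟩, fun s hs hs' => ?_⟩
        rcases le_or_gt s c with h | h
        · exact hcA.2 s hs h
        · have := (hkey s h hs').trans hvcb
          nlinarith
      exact absurd (le_csSup hbdd htA) (not_le.mpr hct)
    · obtain ⟨δ, hδ, hstep⟩ := dini_step hφ (hvnn c ht₀c) (hflow c ht₀c hcS) hε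
      set t := min b (c + δ / 2) with ht
      have hct : c < t := lt_min hcb2 (by linarith)
      have htA : t ∈ A := by
        refine ⟨⟨hac.trans hct.le, min_le_left _ _⟩, fun s hs hs' => ?_⟩
        rcases le_or_gt s c with h | h
        · exact hcA.2 s hs h
        · have hsle : s ≤ c + δ / 2 := hs'.trans (min_le_right _ _)
          have hu := hstep (s - c) (by linarith) (by linarith)
          have hcs : c + (s - c) = s := by ring
          rw [hcs] at hu
          nlinarith
      exact absurd (le_csSup hbdd htA) (not_le.mpr hct)
  exact hcA.2 b hab hceq.ge

/-- once the Lyapunov value of an impulsive trajectory vanishes, it vanishes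
for all later times. -/
theorem vanishForever
    (φ : ℝ → ℝ) (hφ : ClassP φ)
    (t₀ : ℝ) (τ : ℕ → ℝ) (hτ : IsImpulseSeq t₀ τ)
    (v : ℝ → ℝ) (hvnn : ∀ t, t₀ ≤ t → 0 ≤ v t)
    (hreg : ImpulsiveRegular t₀ τ v)
    (hflow : ∀ t, t₀ ≤ t → t ∉ impulseSet τ →
      DiniUpper v t ≤ (((-φ (v t)) : ℝ) : EReal))
    (hjump : ∀ i : ℕ, 1 ≤ i → v (τ i) ≤ Function.leftLim v (τ i))
    (tstar : ℝ) (hts : t₀ ≤ tstar) (hv0 : v tstar = 0) :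
    ∀ t, tstar ≤ t → v t = 0 := by
  intro t ht
  have h1 : v t ≤ v tstar := global_mono hφ hτ hvnn hreg hflow hjump hts ht
  have h2 : 0 ≤ v t := hvnn t (hts.trans ht)
  rw [hv0] at h1
  linarith
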